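/- Let P be a polymatroid over [n] with rank function f, let t ∈ [n], and let j be an integer with α_t ≤ j ≤ β_t, where α_t = f([n]) − f([n]∖{t}) and β_t = f({t}). Let f^t_j be the rank function of the polymatroid P̂^t_j over [n]∖{t}. Then for every subset I ⊆ [n]∖{t}, f^t_j(I) = min{f(I), f(I∪{t}) − j}. In particular, f^t_{α_t}(I) = f(I) and f^t_{β_t}(I) = f(I∪{t}) − f({t}). -/

import Mathlib

open scoped BigOperators

/-- A polymatroid (set of integer bases) over the ground set `E` inside the ambient
index type `ι`: a nonempty finite set of integer vectors supported on `E`, all with the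
same coordinate sum, satisfying the exchange axiom. -/
def IsPolymatroidOn {ι : Type} [DecidableEq ι] (E : Finset ι) (P : Set (ι → ℤ)) : Prop :=
  P.Nonempty ∧ P.Finite ∧
  (∀ a ∈ P, ∀ i, i ∉ E → a i = 0) ∧
  (∀ a ∈ P, ∀ b ∈ P, (∑ i ∈ E, a i) = ∑ i ∈ E, b i) ∧
  (∀ a ∈ P, ∀ b ∈ P, ∀ i, b i < a i →
    ∃ j, a j < b j ∧ (a - Pi.single i 1 + Pi.single j 1) ∈ P ∧
      (b + Pi.single i 1 - Pi.single j 1) ∈ P)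

/-- The rank function `f_P(I) = max_{a ∈ P} ∑_{i ∈ I} a i`. -/
noncomputable def rankFn {ι : Type} (P : Set (ι → ℤ)) (I : Finset ι) : ℤ :=
  sSup ((fun a => ∑ i ∈ I, a i) '' P)

/-- `i ∈ E` is internally active for `a` with respect to `P`:
`a - e i + e j ∉ P` for all `j < i` in the ground set. -/
def IntActive {ι : Type} [LinearOrder ι] (E : Finset ι) (P : Set (ι → ℤ))
    (a : ι → ℤ) (i : ι) : Prop :=
  i ∈ E ∧ ∀ j ∈ E, j < i → (a - Pi.single i 1 + Pi.single j 1) ∉ P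

/-- `i ∈ E` is externally active for `a` with respect to `P`:
`a + e i - e j ∉ P` for all `j < i` in the ground set. -/
def ExtActive {ι : Type} [LinearOrder ι] (E : Finset ι) (P : Set (ι → ℤ))
    (a : ι → ℤ) (i : ι) : Prop :=
  i ∈ E ∧ ∀ j ∈ E, j < i → (a + Pi.single i 1 - Pi.single j 1) ∉ P

/-- The polymatroid Tutte polynomial `𝒯_P(x,y)` as a polynomial in `ℤ[x,y]`,
with `x = X 0`, `y = X 1`. -/
noncomputable def tuttePoly {ι : Type} [LinearOrder ι] (E : Finset ι) (P : Set (ι → ℤ)) :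
    MvPolynomial (Fin 2) ℤ :=
  ∑ᶠ a ∈ P,
    MvPolynomial.X 0 ^ ({i | IntActive E P a i} \ {i | ExtActive E P a i}).ncard *
      MvPolynomial.X 1 ^ ({i | ExtActive E P a i} \ {i | IntActive E P a i}).ncard *
      (MvPolynomial.X 0 + MvPolynomial.X 1 - 1) ^
        ({i | IntActive E P a i} ∩ {i | ExtActive E P a i}).ncard

/-- The interior polynomial `I_P(x) = ∑_{a ∈ P} x^{|E| - |Int(a)|}`. -/
noncomputable def interiorPoly {ι : Type} [LinearOrder ι] (E : Finset ι) (P : Set (ι → ℤ)) :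
    Polynomial ℤ :=
  ∑ᶠ a ∈ P, Polynomial.X ^ (E.card - {i | IntActive E P a i}.ncard)

/-- The exterior polynomial `X_P(y) = ∑_{a ∈ P} y^{|E| - |Ext(a)|}`. -/
noncomputable def exteriorPoly {ι : Type} [LinearOrder ι] (E : Finset ι) (P : Set (ι → ℤ)) :
    Polynomial ℤ :=
  ∑ᶠ a ∈ P, Polynomial.X ^ (E.card - {i | ExtActive E P a i}.ncard)

/-- The slice `P^t_j = {a ∈ P | a t = j}`. -/
def sliceAt {ι : Type} (P : Set (ι → ℤ)) (t : ι) (j : ℤ) : Set (ι → ℤ) :=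
  {a ∈ P | a t = j}

/-- The projection `P̂^t_j` of the slice `P^t_j` under deleting the `t`-th coordinate
(encoded by setting the `t`-th coordinate to `0`). -/
def projAt {ι : Type} [DecidableEq ι] (P : Set (ι → ℤ)) (t : ι) (j : ℤ) : Set (ι → ℤ) :=
  (fun a => Function.update a t 0) '' sliceAt P t j

/-- The set of integer points associated to a rank function `g` on the ground set `E`:
`{a | ∑_{i ∈ I} a i ≤ g I for all I ⊆ E, ∑_{i ∈ E} a i = g E}` (supported on `E`). -/
def polymatroidOfRank {ι : Type} (E : Finset ι) (g : Finset ι → ℤ) : Set (ι → ℤ) :=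
  {a | (∀ i, i ∉ E → a i = 0) ∧ (∀ I ⊆ E, (∑ i ∈ I, a i) ≤ g I) ∧ (∑ i ∈ E, a i) = g E}

/-- The deletion `P ∖ A`: the polymatroid on `E ∖ A` with rank function `T ↦ f_P(T)`. -/
noncomputable def deletion {ι : Type} [DecidableEq ι] (E : Finset ι) (P : Set (ι → ℤ))
    (A : Finset ι) : Set (ι → ℤ) :=
  polymatroidOfRank (E \ A) fun T => rankFn P T

/-- The contraction `P / A`: the polymatroid on `E ∖ A` with rank function
`T ↦ f_P(T ∪ A) - f_P(A)`. -/
noncomputable def contraction {ι : Type} [DecidableEq ι] (E : Finset ι) (P : Set (ι → ℤ))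
    (A : Finset ι) : Set (ι → ℤ) :=
  polymatroidOfRank (E \ A) fun T => rankFn P (T ∪ A) - rankFn P A

/-- The bipartite graph `Bip H` of the hypergraph whose hyperedges are indexed by `ε`
with vertex sets given by `m`: color classes `V` and `ε`, with `v` adjacent to `e`
iff `v ∈ m e`. -/
def bipGraph {V ε : Type} (m : ε → Finset V) : SimpleGraph (V ⊕ ε) :=
  SimpleGraph.fromRel fun a b => ∃ v e, a = Sum.inl v ∧ b = Sum.inr e ∧ v ∈ m e

/-- The vertex set of `Bip H|_{E'}`: the hyperedges in `E'` together with all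
vertices incident with them. -/
def bipVerts {V ε : Type} (m : ε → Finset V) (E' : Finset ε) : Set (V ⊕ ε) :=
  {x | (∃ e ∈ E', x = Sum.inr e) ∨ ∃ v, x = Sum.inl v ∧ ∃ e ∈ E', v ∈ m e}

/-- `μ(E') = |⋃ E'| - c(E')` for `E' ≠ ∅`, and `μ(∅) = 0`, where `c(E')` is the number
of connected components of `Bip H|_{E'}`. -/
noncomputable def muFn {V ε : Type} [DecidableEq V] [DecidableEq ε] (m : ε → Finset V) (E' : Finset ε) : ℤ :=
  if E' = ∅ then 0
  else ((E'.biUnion m).card : ℤ) -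
    (Nat.card ((bipGraph m).induce (bipVerts m E')).ConnectedComponent : ℤ)

section PolymatroidAux

variable {ι : Type} [DecidableEq ι]

private lemma pm_exch {E : Finset ι} {P : Set (ι → ℤ)} (hP : IsPolymatroidOn E P) :
    ∀ a ∈ P, ∀ b ∈ P, ∀ i, b i < a i →
    ∃ j, a j < b j ∧ (a - Pi.single i (1:ℤ) + Pi.single j 1) ∈ P ∧
      (b + Pi.single i (1:ℤ) - Pi.single j 1) ∈ P := hP.2.2.2.2

private lemma sum_single_ite (S : Finset ι) (i : ι) (c : ℤ) :
    (∑ l ∈ S, Pi.single i c l) = if i ∈ S then c else 0 := by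
  simp only [Pi.single_apply]
  exact Finset.sum_ite_eq' S i fun _ => c

private lemma sum_subadd (S : Finset ι) (a : ι → ℤ) (i k : ι) :
    (∑ l ∈ S, ((a - Pi.single i 1 + Pi.single k 1 : ι → ℤ)) l)
      = (∑ l ∈ S, a l) - (if i ∈ S then 1 else 0) + (if k ∈ S then 1 else 0) := by
  simp only [Pi.add_apply, Pi.sub_apply, Finset.sum_add_distrib, Finset.sum_sub_distrib,
    sum_single_ite]

private lemma sum_addsub (S : Finset ι) (a : ι → ℤ) (i k : ι) :
    (∑ l ∈ S, ((a + Pi.single i 1 - Pi.single k 1 : ι → ℤ)) l)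
      = (∑ l ∈ S, a l) + (if i ∈ S then 1 else 0) - (if k ∈ S then 1 else 0) := by
  simp only [Pi.add_apply, Pi.sub_apply, Finset.sum_add_distrib, Finset.sum_sub_distrib,
    sum_single_ite]

private lemma le_rank {P : Set (ι → ℤ)} (hfin : P.Finite) {a : ι → ℤ} (ha : a ∈ P)
    (I : Finset ι) : (∑ i ∈ I, a i) ≤ rankFn P I :=
  le_csSup (Set.Finite.bddAbove (hfin.image _)) ⟨a, ha, rfl⟩

private lemma le_rank_single {P : Set (ι → ℤ)} (hfin : P.Finite) {a : ι → ℤ} (ha : a ∈ P)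
    (t : ι) : a t ≤ rankFn P {t} := by
  simpa using le_rank hfin ha {t}

private lemma rank_attained {P : Set (ι → ℤ)} (hfin : P.Finite) (hne : P.Nonempty)
    (I : Finset ι) : ∃ a ∈ P, (∑ i ∈ I, a i) = rankFn P I := by
  have h : rankFn P I ∈ (fun a => ∑ i ∈ I, a i) '' P :=
    (hne.image _).csSup_mem (hfin.image _)
  obtain ⟨a, ha, h⟩ := h
  exact ⟨a, ha, h⟩

private lemma sum_E_eq {E : Finset ι} {P : Set (ι → ℤ)} (hP : IsPolymatroidOn E P)
    {a : ι → ℤ} (ha : a ∈ P) : (∑ i ∈ E, a i) = rankFn P E := by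
  obtain ⟨b, hb, hbE⟩ := rank_attained hP.2.1 hP.1 E
  rw [← hbE]
  exact hP.2.2.2.1 a ha b hb

private lemma greedy_pair {E : Finset ι} {P : Set (ι → ℤ)} (hP : IsPolymatroidOn E P)
    {I J : Finset ι} (hIJ : I ⊆ J) :
    ∃ a ∈ P, (∑ i ∈ I, a i) = rankFn P I ∧ (∑ i ∈ J, a i) = rankFn P J := by
  classical
  obtain ⟨a0, ha0, ha0J⟩ := rank_attained hP.2.1 hP.1 J
  set S : Set (ι → ℤ) := {b | b ∈ P ∧ (∑ i ∈ J, b i) = rankFn P J} with hS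
  have hSfin : S.Finite := hP.2.1.subset fun x hx => hx.1
  have hSne : S.Nonempty := ⟨a0, ha0, ha0J⟩
  obtain ⟨a, haS, hamax⟩ := Set.exists_max_image S (fun b => ∑ i ∈ I, b i) hSfin hSne
  refine ⟨a, haS.1, ?_, haS.2⟩
  by_contra hne'
  have haIlt : (∑ i ∈ I, a i) < rankFn P I :=
    lt_of_le_of_ne (le_rank hP.2.1 haS.1 I) hne'
  have key : ∀ d : ℕ, ∀ b ∈ P, (∑ i ∈ I, b i) = rankFn P I →
      (∑ l ∈ I, (b l - a l).toNat) = d → False := by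
    intro d
    induction d using Nat.strong_induction_on with
    | _ d IH =>
      intro b hb hbI hd
      have hex : ∃ i ∈ I, a i < b i := by
        by_contra hno
        push_neg at hno
        have hle : (∑ i ∈ I, b i) ≤ ∑ i ∈ I, a i := Finset.sum_le_sum hno
        omega
      obtain ⟨i, hiI, hi⟩ := hex
      obtain ⟨k, hk, hbP', haP'⟩ := pm_exch hP b hb a haS.1 i hi
      have hik : i ≠ k := by intro h; rw [h] at hi; omega
      by_cases hkI : k ∈ I
      · set b' : ι → ℤ := b - Pi.single i 1 + Pi.single k 1 with hb'
        have hb'I : (∑ l ∈ I, b' l) = rankFn P I := by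
          rw [hb', sum_subadd, if_pos hiI, if_pos hkI, hbI]; ring
        have hval : ∀ l, b' l = b l - (if l = i then 1 else 0) + (if l = k then 1 else 0) := by
          intro l; simp [hb', Pi.single_apply]
        have hlt : (∑ l ∈ I, (b' l - a l).toNat) < ∑ l ∈ I, (b l - a l).toNat := by
          apply Finset.sum_lt_sum
          · intro l hlI
            have h1 := hval l
            by_cases h2 : l = i
            · subst h2; rw [if_pos rfl, if_neg hik] at h1; omega
            · by_cases h3 : l = k
              · subst h3; rw [if_neg h2, if_pos rfl] at h1; omega
              · rw [if_neg h2, if_neg h3] at h1; omega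
          · refine ⟨i, hiI, ?_⟩
            have h1 := hval i
            rw [if_pos rfl, if_neg hik] at h1
            omega
        exact IH _ (by omega) b' hbP' hb'I rfl
      · by_cases hkJ : k ∈ J
        · set a' : ι → ℤ := a + Pi.single i 1 - Pi.single k 1 with ha'd
          have ha'J : (∑ l ∈ J, a' l) = rankFn P J := by
            rw [ha'd, sum_addsub, if_pos (hIJ hiI), if_pos hkJ, haS.2]; ring
          have ha'I : (∑ l ∈ I, a' l) = (∑ l ∈ I, a l) + 1 := by
            rw [ha'd, sum_addsub, if_pos hiI, if_neg hkI]; ring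
          have hm := hamax a' ⟨haP', ha'J⟩
          omega
        · set a' : ι → ℤ := a + Pi.single i 1 - Pi.single k 1 with ha'd
          have ha'J : (∑ l ∈ J, a' l) = rankFn P J + 1 := by
            rw [ha'd, sum_addsub, if_pos (hIJ hiI), if_neg hkJ, haS.2]; ring
          have hle := le_rank hP.2.1 haP' J
          omega
  obtain ⟨b0, hb0, hb0I⟩ := rank_attained hP.2.1 hP.1 I
  exact key _ b0 hb0 hb0I rfl

private lemma dec_step {E : Finset ι} {P : Set (ι → ℤ)} (hP : IsPolymatroidOn E P)
    {t : ι} (htE : t ∈ E) {I : Finset ι} (htI : t ∉ I) {a : ι → ℤ} (ha : a ∈ P)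
    (haI : (∑ i ∈ I, a i) = rankFn P I)
    (hat : rankFn P E - rankFn P (E.erase t) < a t) :
    ∃ a' ∈ P, a' t = a t - 1 ∧ (∑ i ∈ I, a' i) = rankFn P I := by
  obtain ⟨c, hc, hcE⟩ := rank_attained hP.2.1 hP.1 (E.erase t)
  have hcsum : (∑ i ∈ E, c i) = rankFn P E := sum_E_eq hP hc
  have herase : (∑ i ∈ E.erase t, c i) + c t = ∑ i ∈ E, c i := Finset.sum_erase_add E c htE
  have hlt : c t < a t := by omega
  obtain ⟨k, hk, haP', -⟩ := pm_exch hP a ha c hc t hlt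
  have hkt : k ≠ t := by intro h; rw [h] at hk; omega
  set a' : ι → ℤ := a - Pi.single t 1 + Pi.single k 1 with ha'd
  have hkI : k ∉ I := by
    intro hkI
    have hgt : (∑ l ∈ I, a' l) = rankFn P I + 1 := by
      rw [ha'd, sum_subadd, if_neg htI, if_pos hkI, haI]; ring
    have hle := le_rank hP.2.1 haP' I
    omega
  refine ⟨a', haP', ?_, ?_⟩
  · rw [ha'd]
    simp [Pi.single_apply, Ne.symm hkt]
  · rw [ha'd, sum_subadd, if_neg htI, if_neg hkI, haI]; ring

private lemma inc_step {E : Finset ι} {P : Set (ι → ℤ)} (hP : IsPolymatroidOn E P)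
    {t : ι} {J : Finset ι} (htJ : t ∈ J) {a : ι → ℤ} (ha : a ∈ P)
    (haJ : (∑ i ∈ J, a i) = rankFn P J) (hat : a t < rankFn P {t}) :
    ∃ a' ∈ P, a' t = a t + 1 ∧ (∑ i ∈ J, a' i) = rankFn P J := by
  obtain ⟨c, hc, hct'⟩ := rank_attained hP.2.1 hP.1 {t}
  have hct : c t = rankFn P {t} := by simpa using hct'
  have hlt : a t < c t := by omega
  obtain ⟨k, hk, -, haP'⟩ := pm_exch hP c hc a ha t hlt
  have hkt : k ≠ t := by intro h; rw [h] at hk; omega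
  set a' : ι → ℤ := a + Pi.single t 1 - Pi.single k 1 with ha'd
  have hkJ : k ∈ J := by
    by_contra hkJ
    have hgt : (∑ l ∈ J, a' l) = rankFn P J + 1 := by
      rw [ha'd, sum_addsub, if_pos htJ, if_neg hkJ, haJ]; ring
    have hle := le_rank hP.2.1 haP' J
    omega
  refine ⟨a', haP', ?_, ?_⟩
  · rw [ha'd]
    simp [Pi.single_apply, Ne.symm hkt]
  · rw [ha'd, sum_addsub, if_pos htJ, if_pos hkJ, haJ]; ring

private lemma reach_down {E : Finset ι} {P : Set (ι → ℤ)} (hP : IsPolymatroidOn E P)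
    {t : ι} (htE : t ∈ E) {I : Finset ι} (htI : t ∉ I) {j : ℤ}
    (hj : rankFn P E - rankFn P (E.erase t) ≤ j) :
    ∀ d : ℕ, ∀ a ∈ P, (∑ i ∈ I, a i) = rankFn P I → a t - j = (d : ℤ) →
      ∃ a' ∈ P, a' t = j ∧ (∑ i ∈ I, a' i) = rankFn P I := by
  intro d
  induction d with
  | zero => intro a ha haI h0; exact ⟨a, ha, by omega, haI⟩
  | succ d IH =>
    intro a ha haI hd
    obtain ⟨a', ha', hat, haI'⟩ := dec_step hP htE htI ha haI (by omega)
    exact IH a' ha' haI' (by omega)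

private lemma reach_up {E : Finset ι} {P : Set (ι → ℤ)} (hP : IsPolymatroidOn E P)
    {t : ι} {J : Finset ι} (htJ : t ∈ J) {j : ℤ} (hj : j ≤ rankFn P {t}) :
    ∀ d : ℕ, ∀ a ∈ P, (∑ i ∈ J, a i) = rankFn P J → j - a t = (d : ℤ) →
      ∃ a' ∈ P, a' t = j ∧ (∑ i ∈ J, a' i) = rankFn P J := by
  intro d
  induction d with
  | zero => intro a ha haJ h0; exact ⟨a, ha, by omega, haJ⟩
  | succ d IH =>
    intro a ha haJ hd
    obtain ⟨a', ha', hat, haJ'⟩ := inc_step hP htJ ha haJ (by omega)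
    exact IH a' ha' haJ' (by omega)

private lemma main_formula {E : Finset ι} {P : Set (ι → ℤ)} (hP : IsPolymatroidOn E P)
    {t : ι} (htE : t ∈ E) {j : ℤ}
    (h1 : rankFn P E - rankFn P (E.erase t) ≤ j) (h2 : j ≤ rankFn P {t})
    {I : Finset ι} (hI : I ⊆ E.erase t) :
    rankFn (projAt P t j) I = min (rankFn P I) (rankFn P (insert t I) - j) := by
  classical
  have htI : t ∉ I := fun h => (Finset.mem_erase.mp (hI h)).1 rfl
  have hIJ : I ⊆ insert t I := Finset.subset_insert t I
  have hsumJ : ∀ b : ι → ℤ, (∑ i ∈ insert t I, b i) = b t + ∑ i ∈ I, b i :=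
    fun b => Finset.sum_insert htI
  obtain ⟨a0, ha0, ha0I, ha0J⟩ := greedy_pair hP hIJ
  have ha0t : a0 t = rankFn P (insert t I) - rankFn P I := by
    have := hsumJ a0; omega
  have hwit : ∃ a ∈ P, a t = j ∧
      (∑ i ∈ I, a i) = min (rankFn P I) (rankFn P (insert t I) - j) := by
    rcases le_total j (a0 t) with hle | hle
    · obtain ⟨a, ha, hat, haI⟩ :=
        reach_down hP htE htI h1 (a0 t - j).toNat a0 ha0 ha0I (by omega)
      exact ⟨a, ha, hat, by rw [haI]; exact (min_eq_left (by omega)).symm⟩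
    · obtain ⟨a, ha, hat, haJ⟩ :=
        reach_up hP (Finset.mem_insert_self t I) h2 (j - a0 t).toNat a0 ha0 ha0J (by omega)
      refine ⟨a, ha, hat, ?_⟩
      have h3 : (∑ i ∈ I, a i) = rankFn P (insert t I) - j := by
        have := hsumJ a; omega
      rw [h3]
      exact (min_eq_right (by omega)).symm
  obtain ⟨aw, hawP, hawt, hawI⟩ := hwit
  have hupdsum : ∀ b : ι → ℤ, (∑ i ∈ I, Function.update b t 0 i) = ∑ i ∈ I, b i := by
    intro b
    refine Finset.sum_congr rfl fun i hiI => ?_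
    exact Function.update_of_ne (ne_of_mem_of_not_mem hiI htI) _ _
  have himg : (fun b => ∑ i ∈ I, b i) '' (projAt P t j)
      = (fun a => ∑ i ∈ I, a i) '' (sliceAt P t j) := by
    unfold projAt
    rw [Set.image_image]
    exact Set.image_congr fun a _ => hupdsum a
  have hslice_fin : (sliceAt P t j).Finite := hP.2.1.subset fun x hx => hx.1
  have himg_fin : ((fun b => ∑ i ∈ I, b i) '' (projAt P t j)).Finite := by
    rw [himg]; exact hslice_fin.image _
  have hmem : min (rankFn P I) (rankFn P (insert t I) - j)
      ∈ (fun b => ∑ i ∈ I, b i) '' (projAt P t j) := by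
    rw [himg]
    exact ⟨aw, ⟨hawP, hawt⟩, hawI⟩
  have hub : ∀ x ∈ (fun b => ∑ i ∈ I, b i) '' (projAt P t j),
      x ≤ min (rankFn P I) (rankFn P (insert t I) - j) := by
    intro x hx
    rw [himg] at hx
    obtain ⟨a, ⟨haP, hat⟩, rfl⟩ := hx
    have hr1 := le_rank hP.2.1 haP I
    have hr2 := le_rank hP.2.1 haP (insert t I)
    have hs := hsumJ a
    simp only
    refine le_min hr1 ?_
    omega
  exact le_antisymm (csSup_le ⟨_, hmem⟩ hub) (le_csSup himg_fin.bddAbove hmem)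

private lemma alpha_le_beta {E : Finset ι} {P : Set (ι → ℤ)} (hP : IsPolymatroidOn E P)
    {t : ι} (htE : t ∈ E) :
    rankFn P E - rankFn P (E.erase t) ≤ rankFn P {t} := by
  obtain ⟨a, ha⟩ := hP.1
  have hE := sum_E_eq hP ha
  have h1 := le_rank hP.2.1 ha (E.erase t)
  have h2 := le_rank_single hP.2.1 ha t
  have h3 := Finset.sum_erase_add E a htE
  omega

private lemma alpha_le_diff {E : Finset ι} {P : Set (ι → ℤ)} (hP : IsPolymatroidOn E P)
    {t : ι} (htE : t ∈ E) {I : Finset ι} (hI : I ⊆ E.erase t) :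
    rankFn P I + (rankFn P E - rankFn P (E.erase t)) ≤ rankFn P (insert t I) := by
  have htI : t ∉ I := fun h => (Finset.mem_erase.mp (hI h)).1 rfl
  obtain ⟨a, ha, haI, haE'⟩ := greedy_pair hP hI
  have hE := sum_E_eq hP ha
  have h3 := Finset.sum_erase_add E a htE
  have hins : (∑ i ∈ insert t I, a i) = a t + ∑ i ∈ I, a i := Finset.sum_insert htI
  have hle := le_rank hP.2.1 ha (insert t I)
  omega

private lemma diff_le_beta {E : Finset ι} {P : Set (ι → ℤ)} (hP : IsPolymatroidOn E P)
    {t : ι} {I : Finset ι} (htI : t ∉ I) :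
    rankFn P (insert t I) - rankFn P {t} ≤ rankFn P I := by
  obtain ⟨a, ha, haJ⟩ := rank_attained hP.2.1 hP.1 (insert t I)
  have h1 := le_rank hP.2.1 ha I
  have h2 := le_rank_single hP.2.1 ha t
  have hins : (∑ i ∈ insert t I, a i) = a t + ∑ i ∈ I, a i := Finset.sum_insert htI
  omega

end PolymatroidAux

/-- the rank function of `P̂^t_j` is `I ↦ min (f I) (f (I ∪ {t}) - j)`;
in particular it is `f` for `j = α_t` and `I ↦ f (I ∪ {t}) - f {t}` for `j = β_t`. -/
theorem statement1 {ι : Type} [LinearOrder ι] (E : Finset ι) (P : Set (ι → ℤ))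
    (hP : IsPolymatroidOn E P) (t : ι) (ht : t ∈ E) (j : ℤ)
    (h1 : rankFn P E - rankFn P (E.erase t) ≤ j) (h2 : j ≤ rankFn P {t}) :
    (∀ I ⊆ E.erase t, rankFn (projAt P t j) I =
        min (rankFn P I) (rankFn P (insert t I) - j)) ∧
    (∀ I ⊆ E.erase t,
        rankFn (projAt P t (rankFn P E - rankFn P (E.erase t))) I = rankFn P I ∧
        rankFn (projAt P t (rankFn P {t})) I = rankFn P (insert t I) - rankFn P {t}) := by
  constructor
  · intro I hI
    exact main_formula hP ht h1 h2 hI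
  · intro I hI
    have htI : t ∉ I := fun h => (Finset.mem_erase.mp (hI h)).1 rfl
    have hab := alpha_le_beta hP ht
    constructor
    · rw [main_formula hP ht le_rfl hab hI]
      have := alpha_le_diff hP ht hI
      exact min_eq_left (by omega)
    · rw [main_formula hP ht hab le_rfl hI]
      exact min_eq_right (diff_le_beta hP htI)
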